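/- Correctness of bidirectional coupling: Let N be a network model, and for each node x let T(x) := ND({w(q) : q a directed path from r to x}) (top-down labels) and B(x) := ND({w(q) : q a directed path from x to t}) (bottom-up labels). Then for every layer index j ∈ {1, …, n+1}, ND(⋃_{x ∈ L_j} ND(T(x) + B(x))) = P(N), where S_1 + S_2 denotes the Minkowski sum {z_1 + z_2 : z_1 ∈ S_1, z_2 ∈ S_2}. -/

import Mathlib

open Pointwise

/-- `y` dominates `y'`: componentwise at least as large and not equal. -/
def dominates {K : ℕ} (y y' : Fin K → ℝ) : Prop :=
  (∀ k, y' k ≤ y k) ∧ y ≠ y'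

/-- The nondominated subset of `S`. -/
def ND {K : ℕ} (S : Set (Fin K → ℝ)) : Set (Fin K → ℝ) :=
  {y ∈ S | ¬ ∃ y' ∈ S, dominates y' y}

/-- `IsPath tl hd p u v`: the list of arcs `p` forms a directed walk from `u` to `v`. -/
def IsPath {V A : Type*} (tl hd : A → V) : List A → V → V → Prop
  | [], u, v => u = v
  | a :: p, u, v => tl a = u ∧ IsPath tl hd p (hd a) v

/-- Total weight of a list of arcs. -/
def pathWeight {A : Type*} {K : ℕ} (w : A → Fin K → ℝ) (p : List A) : Fin K → ℝ :=
  (p.map w).sum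

/-- A layered-acyclic network model with `n + 1` layers (indexed `1, …, n+1`),
a single root in layer `1`, a single terminal in layer `n+1`, every arc going
from one layer to the next, and `K`-dimensional arc weights. -/
structure Network (V A : Type*) (K : ℕ) where
  tl : A → V
  hd : A → V
  w : A → Fin K → ℝ
  n : ℕ
  layer : V → ℕ
  layer_pos : ∀ v, 1 ≤ layer v
  layer_le : ∀ v, layer v ≤ n + 1
  arc_step : ∀ a, layer (hd a) = layer (tl a) + 1
  root : V
  terminal : V
  root_layer : layer root = 1
  terminal_layer : layer terminal = n + 1
  root_unique : ∀ v, layer v = 1 → v = root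
  terminal_unique : ∀ v, layer v = n + 1 → v = terminal
  layer_nonempty : ∀ j, 1 ≤ j → j ≤ n + 1 → ∃ v, layer v = j

namespace Network

variable {V A : Type*} {K : ℕ}

/-- The set of directed paths from `u` to `v`. -/
def Paths (N : Network V A K) (u v : V) : Set (List A) :=
  {p | IsPath N.tl N.hd p u v}

/-- The set of weights of directed paths from `u` to `v`. -/
def weights (N : Network V A K) (u v : V) : Set (Fin K → ℝ) :=
  pathWeight N.w '' N.Paths u v

/-- The Pareto frontier of the network. -/
def Pareto (N : Network V A K) : Set (Fin K → ℝ) :=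
  ND (N.weights N.root N.terminal)

end Network

lemma dominates_iff_lt {K : ℕ} (y y' : Fin K → ℝ) : dominates y y' ↔ y' < y := by
  constructor
  · rintro ⟨h1, h2⟩
    exact lt_of_le_of_ne (by exact h1) (Ne.symm h2)
  · intro h
    exact ⟨fun k => h.le k, (ne_of_lt h).symm⟩

lemma ND_subset {K : ℕ} (S : Set (Fin K → ℝ)) : ND S ⊆ S := fun _ hy => hy.1

lemma exists_nd_ge {K : ℕ} {S : Set (Fin K → ℝ)} (hS : S.Finite) {y : Fin K → ℝ}
    (hy : y ∈ S) : ∃ a ∈ ND S, y ≤ a := by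
  obtain ⟨a, ⟨haS, hya⟩, hmax⟩ := Set.Finite.exists_maximalFor id {z ∈ S | y ≤ z}
    (hS.subset (fun z hz => hz.1)) ⟨y, hy, le_refl y⟩
  refine ⟨a, ⟨haS, ?_⟩, hya⟩
  rintro ⟨y', hy'S, hdom⟩
  rw [dominates_iff_lt] at hdom
  exact absurd (hmax ⟨hy'S, hya.trans hdom.le⟩ hdom.le) (not_le_of_gt hdom)

lemma isPath_append {V A : Type*} {tl hd : A → V} {p1 p2 : List A} {u x v : V}
    (h1 : IsPath tl hd p1 u x) (h2 : IsPath tl hd p2 x v) :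
    IsPath tl hd (p1 ++ p2) u v := by
  induction p1 generalizing u with
  | nil => simp only [IsPath] at h1; subst h1; exact h2
  | cons a p ih => exact ⟨h1.1, ih h1.2⟩

lemma pathWeight_append {A : Type*} {K : ℕ} (w : A → Fin K → ℝ) (p1 p2 : List A) :
    pathWeight w (p1 ++ p2) = pathWeight w p1 + pathWeight w p2 := by
  simp [pathWeight]

lemma layer_isPath {V A : Type*} {K : ℕ} (N : Network V A K) {p : List A} {u v : V}
    (h : IsPath N.tl N.hd p u v) : N.layer v = N.layer u + p.length := by
  induction p generalizing u with
  | nil => simp only [IsPath] at h; subst h; simp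
  | cons a p ih =>
    obtain ⟨h1, h2⟩ := h
    have h3 := ih h2
    have h4 := N.arc_step a
    rw [h1] at h4
    simp only [List.length_cons]
    omega

lemma isPath_split {V A : Type*} {K : ℕ} (N : Network V A K) {p : List A} {u v : V}
    (h : IsPath N.tl N.hd p u v) {j : ℕ} (h1 : N.layer u ≤ j) (h2 : j ≤ N.layer v) :
    ∃ x p1 p2, N.layer x = j ∧ p = p1 ++ p2 ∧
      IsPath N.tl N.hd p1 u x ∧ IsPath N.tl N.hd p2 x v := by
  induction p generalizing u with
  | nil =>
    obtain rfl : u = v := h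
    refine ⟨u, [], [], by omega, rfl, rfl, rfl⟩
  | cons a p ih =>
    obtain ⟨ha, hp⟩ := h
    rcases eq_or_lt_of_le h1 with heq | hlt
    · exact ⟨u, [], a :: p, heq, rfl, rfl, ⟨ha, hp⟩⟩
    · have hs : N.layer (N.hd a) ≤ j := by
        have := N.arc_step a; rw [ha] at this; omega
      obtain ⟨x, p1, p2, hx, hpe, hp1, hp2⟩ := ih hp hs
      exact ⟨x, a :: p1, p2, hx, by rw [hpe]; rfl, ⟨ha, hp1⟩, hp2⟩

lemma weights_finite {V A : Type*} [Fintype A] {K : ℕ} (N : Network V A K) (u v : V) :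
    (N.weights u v).Finite := by
  apply Set.Finite.image
  apply Set.Finite.subset (List.finite_length_le A N.n)
  intro p hp
  have h := layer_isPath N hp
  have := N.layer_pos u
  have := N.layer_le v
  simp only [Set.mem_setOf_eq]
  omega

lemma sum_subset_weights {V A : Type*} {K : ℕ} (N : Network V A K) (x : V) :
    N.weights N.root x + N.weights x N.terminal ⊆ N.weights N.root N.terminal := by
  intro z hz
  rw [Set.mem_add] at hz
  obtain ⟨a, ⟨p1, hp1, rfl⟩, b, ⟨p2, hp2, rfl⟩, rfl⟩ := hz
  exact ⟨p1 ++ p2, isPath_append hp1 hp2, pathWeight_append N.w p1 p2⟩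


/-- **Correctness of bidirectional coupling.**  For each node `x` let
`T(x) = ND({w(q) : q an r–x path})` (top-down labels) and
`B(x) = ND({w(q) : q an x–t path})` (bottom-up labels).  Then for every layer index
`j ∈ {1, …, n+1}`, the nondominated set of the union over the nodes `x` of layer `j` of
the couplings `ND(T(x) + B(x))` equals the Pareto frontier of the network. -/
theorem bidirectional_coupling_correct {V A : Type*} [Fintype V] [Fintype A] {K : ℕ}
    (N : Network V A K) (j : ℕ) (hj1 : 1 ≤ j) (hj2 : j ≤ N.n + 1) :
    ND (⋃ x ∈ {x : V | N.layer x = j},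
        ND (ND (N.weights N.root x) + ND (N.weights x N.terminal))) = N.Pareto := by
  set W := N.weights N.root N.terminal with hWdef
  set U := ⋃ x ∈ {x : V | N.layer x = j},
      ND (ND (N.weights N.root x) + ND (N.weights x N.terminal)) with hUdef
  have hWfin : W.Finite := weights_finite N _ _
  have hsub : ∀ x : V, ND (N.weights N.root x) + ND (N.weights x N.terminal) ⊆ W := by
    intro x
    refine Set.Subset.trans ?_ (sum_subset_weights N x)
    exact Set.add_subset_add (ND_subset _) (ND_subset _)
  have hUW : U ⊆ W := by
    intro z hz
    rw [hUdef, Set.mem_iUnion] at hz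
    obtain ⟨x, hz⟩ := hz
    rw [Set.mem_iUnion] at hz
    obtain ⟨hx, hz⟩ := hz
    exact hsub x hz.1
  have hPU : ND W ⊆ U := by
    rintro z ⟨hzW, hznd⟩
    obtain ⟨p, hp, rfl⟩ := hzW
    have hp' : IsPath N.tl N.hd p N.root N.terminal := hp
    obtain ⟨x, p1, p2, hx, rfl, hp1, hp2⟩ := isPath_split N (j := j) hp'
      (by rw [N.root_layer]; exact hj1) (by rw [N.terminal_layer]; exact hj2)
    have ha : pathWeight N.w p1 ∈ ND (N.weights N.root x) := by
      refine ⟨⟨p1, hp1, rfl⟩, ?_⟩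
      rintro ⟨a', ⟨q, hq, rfl⟩, hdom⟩
      apply hznd
      refine ⟨pathWeight N.w (q ++ p2), ⟨q ++ p2, isPath_append hq hp2, rfl⟩, ?_⟩
      rw [dominates_iff_lt] at hdom ⊢
      rw [pathWeight_append, pathWeight_append]
      exact add_lt_add_left hdom _
    have hb : pathWeight N.w p2 ∈ ND (N.weights x N.terminal) := by
      refine ⟨⟨p2, hp2, rfl⟩, ?_⟩
      rintro ⟨b', ⟨q, hq, rfl⟩, hdom⟩
      apply hznd
      refine ⟨pathWeight N.w (p1 ++ q), ⟨p1 ++ q, isPath_append hp1 hq, rfl⟩, ?_⟩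
      rw [dominates_iff_lt] at hdom ⊢
      rw [pathWeight_append, pathWeight_append]
      exact add_lt_add_right hdom _
    have hzsum : pathWeight N.w (p1 ++ p2) ∈
        ND (N.weights N.root x) + ND (N.weights x N.terminal) := by
      rw [pathWeight_append]
      exact Set.add_mem_add ha hb
    have hmem : pathWeight N.w (p1 ++ p2) ∈
        ND (ND (N.weights N.root x) + ND (N.weights x N.terminal)) := by
      refine ⟨hzsum, ?_⟩
      rintro ⟨y', hy', hdom⟩
      exact hznd ⟨y', hsub x hy', hdom⟩
    rw [hUdef, Set.mem_iUnion]
    exact ⟨x, Set.mem_iUnion.mpr ⟨hx, hmem⟩⟩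
  show ND U = ND W
  apply Set.Subset.antisymm
  · rintro z ⟨hzU, hznd⟩
    refine ⟨hUW hzU, ?_⟩
    rintro ⟨y', hy'W, hdom⟩
    obtain ⟨a, haND, hya⟩ := exists_nd_ge hWfin hy'W
    refine hznd ⟨a, hPU haND, ?_⟩
    rw [dominates_iff_lt] at hdom ⊢
    exact lt_of_lt_of_le hdom hya
  · intro z hz
    refine ⟨hPU hz, ?_⟩
    rintro ⟨y', hy'U, hdom⟩
    exact hz.2 ⟨y', hUW hy'U, hdom⟩
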